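/- Fix E_p > 0. Let H_p be a Hermitian operator with spectral decomposition H_p = Σ_a λ_a Π_a (distinct real eigenvalues λ_a, pairwise orthogonal eigenprojections Π_a summing to the identity) having at least two distinct eigenvalues, let V, W be operators, and let P be an orthogonal projection such that Σ_a Π_a (V − W) Π_a P = 0. Define K(t) = (∫_0^t e^{i E_p H_p τ} (V − W) e^{−i E_p H_p τ} dτ) P. Then for every t ≥ 0: ‖K(t)‖ ≤ (2 / E_p) · Σ_{a ≠ a'} ‖V − W‖ / |λ_a − λ_{a'}|, where ‖·‖ is the operator norm and the sum runs over ordered pairs of distinct eigenvalue indices. -/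

import Mathlib

set_option synthInstance.maxHeartbeats 1000000
set_option maxHeartbeats 1000000

/-- Operators on a fixed finite-dimensional complex Hilbert space. -/
noncomputable abbrev Op (n : ℕ) :=
  EuclideanSpace ℂ (Fin n) →L[ℂ] EuclideanSpace ℂ (Fin n)

lemma proj_norm_le_one {n : ℕ} (P : Op n) (hPidem : P * P = P) (hPSA : IsSelfAdjoint P) :
    ‖P‖ ≤ 1 := by
  have h : ‖P‖ * ‖P‖ = ‖P‖ := by
    conv_rhs => rw [← hPidem]
    rw [← CStarRing.norm_star_mul_self, hPSA.star_eq, hPidem]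
  nlinarith [norm_nonneg P]

lemma sum_proj_pow {n : ℕ} {ι : Type} [Fintype ι] [DecidableEq ι]
    (Proj : ι → Op n)
    (hProjIdem : ∀ a, Proj a * Proj a = Proj a)
    (hProjOrth : ∀ a b, a ≠ b → Proj a * Proj b = 0)
    (c : ι → ℂ) (k : ℕ) :
    (∑ a, c a • Proj a) ^ (k + 1) = ∑ a, (c a) ^ (k + 1) • Proj a := by
  induction k with
  | zero => simp
  | succ k ih =>
    rw [pow_succ, ih, Finset.sum_mul_sum]
    rw [Finset.sum_congr rfl (fun a _ => Finset.sum_eq_single a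
      (fun b _ hb => by
        have h0 : Proj a * Proj b = 0 := hProjOrth a b (fun h => hb h.symm)
        simp only [smul_mul_assoc, mul_smul_comm, h0]
        ext x; simp)
      (fun h => absurd (Finset.mem_univ a) h))]
    simp only [smul_mul_assoc, mul_smul_comm, hProjIdem, smul_smul]
    congr 1; ext a; ring_nf

lemma exp_sum_proj {n : ℕ} {ι : Type} [Fintype ι] [DecidableEq ι]
    (Proj : ι → Op n)
    (hProjIdem : ∀ a, Proj a * Proj a = Proj a)
    (hProjOrth : ∀ a b, a ≠ b → Proj a * Proj b = 0)
    (hProjSum : ∑ a, Proj a = 1)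
    (c : ι → ℂ) :
    NormedSpace.exp (∑ a, c a • Proj a) = ∑ a, Complex.exp (c a) • Proj a := by
  rw [NormedSpace.exp_eq_tsum ℂ]
  have key : ∀ m : ℕ, (((Nat.factorial m : ℂ))⁻¹ • (∑ a, c a • Proj a) ^ m)
      = ∑ a, (((Nat.factorial m : ℂ))⁻¹ • (c a) ^ m) • Proj a := by
    intro m
    match m with
    | 0 => simp [hProjSum]
    | (k+1) =>
      rw [sum_proj_pow Proj hProjIdem hProjOrth c k, Finset.smul_sum]
      simp only [smul_smul, smul_eq_mul]
  simp only [key]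
  rw [Summable.tsum_finsetSum (fun a _ => ((NormedSpace.expSeries_summable' (𝕂 := ℂ) (c a)).smul_const (Proj a)))]
  refine Finset.sum_congr rfl fun a _ => ?_
  rw [Summable.tsum_smul_const (NormedSpace.expSeries_summable' (𝕂 := ℂ) (c a))]
  congr 1
  rw [Complex.exp_eq_exp_ℂ, NormedSpace.exp_eq_tsum ℂ]

lemma sum_proj_smul_mul {n : ℕ} {ι : Type} [Fintype ι] [DecidableEq ι]
    (Proj : ι → Op n) (B : Op n) (x y : ι → ℂ) :
    (∑ a, x a • Proj a) * B * (∑ b, y b • Proj b)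
      = ∑ q : ι × ι, (x q.1 * y q.2) • (Proj q.1 * B * Proj q.2) := by
  rw [Finset.sum_mul, Finset.sum_mul_sum, ← Finset.univ_product_univ, Finset.sum_product]
  refine Finset.sum_congr rfl fun a _ => Finset.sum_congr rfl fun b _ => ?_
  simp only [smul_mul_assoc, mul_smul_comm, smul_smul, mul_comm]

/-- The finite-penalty bound on `K(t)` (Eq. (5b)):
`‖K(t)‖ ≤ (2/E_p) Σ_{a≠a'} ‖V-W‖ / |λ_a - λ_{a'}|`. -/
theorem K_norm_bound
    {n : ℕ} {ι : Type} [Fintype ι] [DecidableEq ι]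
    (Ep : ℝ) (hEp : 0 < Ep)
    -- spectral decomposition of the penalty Hamiltonian, with ≥ 2 eigenvalues
    (lam : ι → ℝ) (hlam : Function.Injective lam)
    (hcard : 2 ≤ Fintype.card ι)
    (Proj : ι → Op n)
    (hProjSA : ∀ a, IsSelfAdjoint (Proj a))
    (hProjIdem : ∀ a, Proj a * Proj a = Proj a)
    (hProjOrth : ∀ a b, a ≠ b → Proj a * Proj b = 0)
    (hProjSum : ∑ a, Proj a = 1)
    (Hp : Op n) (hHpSA : IsSelfAdjoint Hp)
    (hHp : Hp = ∑ a, (lam a : ℂ) • Proj a)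
    -- the operators V, W and the projection P
    (V W : Op n)
    (P : Op n) (hPidem : P * P = P) (hPSA : IsSelfAdjoint P)
    -- the condition Σ_a Π_a (V-W) Π_a P = 0
    (hcond : (∑ a, Proj a * (V - W) * Proj a) * P = 0)
    (K : ℝ → Op n)
    (hK : ∀ t : ℝ, K t =
      (∫ τ in (0:ℝ)..t,
        NormedSpace.exp ((Complex.I * (Ep : ℂ) * (τ : ℂ)) • Hp) * (V - W) *
          NormedSpace.exp ((-(Complex.I * (Ep : ℂ) * (τ : ℂ))) • Hp)) * P) :
    ∀ t : ℝ, 0 ≤ t →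
      ‖K t‖ ≤ (2 / Ep) *
        ∑ p ∈ Finset.univ.filter (fun p : ι × ι => p.1 ≠ p.2),
          ‖V - W‖ / |lam p.1 - lam p.2| := by
  intro t ht
  -- notation
  set c : ι × ι → ℂ := fun q => Complex.I * (Ep : ℂ) * ((lam q.1 : ℂ) - (lam q.2 : ℂ)) with hc
  set M : ι × ι → Op n := fun q => Proj q.1 * (V - W) * Proj q.2 * P with hM
  -- the exponential of z • Hp
  have hexp : ∀ z : ℂ, NormedSpace.exp (z • Hp) = ∑ a, Complex.exp (z * lam a) • Proj a := by
    intro z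
    rw [hHp, Finset.smul_sum]
    simp only [smul_smul]
    exact exp_sum_proj Proj hProjIdem hProjOrth hProjSum _
  -- the integrand as a sum
  have hg : ∀ τ : ℝ,
      NormedSpace.exp ((Complex.I * (Ep : ℂ) * (τ : ℂ)) • Hp) * (V - W) *
        NormedSpace.exp ((-(Complex.I * (Ep : ℂ) * (τ : ℂ))) • Hp)
      = ∑ q : ι × ι, Complex.exp (c q * τ) • (Proj q.1 * (V - W) * Proj q.2) := by
    intro τ
    rw [hexp, hexp, sum_proj_smul_mul]
    refine Finset.sum_congr rfl fun q _ => ?_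
    rw [← Complex.exp_add]
    congr 1
    simp only [hc]
    ring
  -- compute K t
  have hKt : K t = ∑ q : ι × ι, (∫ τ in (0:ℝ)..t, Complex.exp (c q * τ)) • M q := by
    rw [hK t]
    have : (∫ τ in (0:ℝ)..t,
        NormedSpace.exp ((Complex.I * (Ep : ℂ) * (τ : ℂ)) • Hp) * (V - W) *
          NormedSpace.exp ((-(Complex.I * (Ep : ℂ) * (τ : ℂ))) • Hp))
        = ∑ q : ι × ι, (∫ τ in (0:ℝ)..t, Complex.exp (c q * τ)) • (Proj q.1 * (V - W) * Proj q.2) := by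
      rw [intervalIntegral.integral_congr (g := fun τ =>
        ∑ q : ι × ι, Complex.exp (c q * τ) • (Proj q.1 * (V - W) * Proj q.2))
        (fun τ _ => hg τ)]
      rw [intervalIntegral.integral_finset_sum (μ := MeasureTheory.volume) (a := (0:ℝ)) (b := t)
        (f := fun (q : ι × ι) (τ : ℝ) => Complex.exp (c q * τ) • (Proj q.1 * (V - W) * Proj q.2))
        (fun q _ => Continuous.intervalIntegrable
          (by exact (Complex.continuous_exp.comp
            (continuous_const.mul Complex.continuous_ofReal)).smul continuous_const) _ _)]
      exact Finset.sum_congr rfl fun q _ => intervalIntegral.integral_smul_const _ _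
    rw [this, Finset.sum_mul]
    exact Finset.sum_congr rfl fun q _ => smul_mul_assoc _ _ _
  -- split into diagonal and off-diagonal parts
  rw [hKt, ← Finset.sum_filter_add_sum_filter_not Finset.univ (fun q : ι × ι => q.1 ≠ q.2)]
  -- diagonal part vanishes
  have hdiagset : Finset.univ.filter (fun q : ι × ι => ¬ q.1 ≠ q.2)
      = Finset.univ.image (fun a : ι => (a, a)) := by
    ext q
    simp only [Finset.mem_filter, Finset.mem_univ, true_and, not_not, Finset.mem_image]
    constructor
    · intro h; exact ⟨q.1, by simp [Prod.ext_iff, h]⟩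
    · rintro ⟨a, rfl⟩; rfl
  have hdiag : (∑ q ∈ Finset.univ.filter (fun q : ι × ι => ¬ q.1 ≠ q.2),
      (∫ τ in (0:ℝ)..t, Complex.exp (c q * τ)) • M q) = 0 := by
    rw [hdiagset, Finset.sum_image (fun a _ b _ h => (Prod.ext_iff.mp h).1)]
    have hterm : ∀ a : ι, (∫ τ in (0:ℝ)..t, Complex.exp (c (a, a) * τ)) • M (a, a)
        = (t : ℂ) • (Proj a * (V - W) * Proj a * P) := by
      intro a
      have : c (a, a) = 0 := by simp [hc]
      rw [this]
      simp
      rfl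
    rw [Finset.sum_congr rfl fun a _ => hterm a]
    rw [← Finset.smul_sum, ← Finset.sum_mul, hcond]
    ext x; simp
  rw [hdiag, add_zero]
  -- bound the off-diagonal sum
  have hbound : ∀ q ∈ Finset.univ.filter (fun q : ι × ι => q.1 ≠ q.2),
      ‖(∫ τ in (0:ℝ)..t, Complex.exp (c q * τ)) • M q‖
        ≤ (2 / Ep) * (‖V - W‖ / |lam q.1 - lam q.2|) := by
    intro q hq
    rw [Finset.mem_filter] at hq
    have hΔ : lam q.1 - lam q.2 ≠ 0 := sub_ne_zero.mpr (fun h => hq.2 (hlam h))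
    have hΔpos : 0 < |lam q.1 - lam q.2| := abs_pos.mpr hΔ
    have hcne : c q ≠ 0 := by
      simp only [hc]
      refine mul_ne_zero (mul_ne_zero Complex.I_ne_zero ?_) ?_
      · exact_mod_cast ne_of_gt hEp
      · rw [← Complex.ofReal_sub]
        exact_mod_cast hΔ
    have hIq : (∫ τ in (0:ℝ)..t, Complex.exp (c q * τ)) = (Complex.exp (c q * t) - 1) / c q := by
      rw [integral_exp_mul_complex hcne]
      norm_num
    have habs : ‖(Complex.exp (c q * t) - 1) / c q‖ ≤ 2 / (Ep * |lam q.1 - lam q.2|) := by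
      rw [norm_div]
      have h1 : ‖Complex.exp (c q * t)‖ = 1 := by
        have : c q * t = ((Ep * (lam q.1 - lam q.2) * t : ℝ) : ℂ) * Complex.I := by
          simp only [hc]; push_cast; ring
        rw [this, Complex.norm_exp_ofReal_mul_I]
      have h2 : ‖Complex.exp (c q * t) - 1‖ ≤ 2 := by
        calc ‖Complex.exp (c q * t) - 1‖ ≤ ‖Complex.exp (c q * t)‖ + ‖(1 : ℂ)‖ := norm_sub_le _ _
        _ = 2 := by rw [h1]; norm_num
      have h3 : ‖c q‖ = Ep * |lam q.1 - lam q.2| := by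
        simp only [hc]
        rw [norm_mul, norm_mul, Complex.norm_I, ← Complex.ofReal_sub, Complex.norm_real,
          Complex.norm_real]
        simp [Real.norm_eq_abs, abs_of_pos hEp]
      rw [h3]
      exact div_le_div_of_nonneg_right h2 (by positivity)
    have hMq : ‖M q‖ ≤ ‖V - W‖ := by
      have p1 := proj_norm_le_one (Proj q.1) (hProjIdem q.1) (hProjSA q.1)
      have p2 := proj_norm_le_one (Proj q.2) (hProjIdem q.2) (hProjSA q.2)
      have pP := proj_norm_le_one P hPidem hPSA
      have b1 : ‖M q‖ ≤ ‖Proj q.1 * (V - W) * Proj q.2‖ * ‖P‖ := norm_mul_le _ _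
      have b2 : ‖Proj q.1 * (V - W) * Proj q.2‖ ≤ ‖Proj q.1 * (V - W)‖ * ‖Proj q.2‖ :=
        norm_mul_le _ _
      have b3 : ‖Proj q.1 * (V - W)‖ ≤ ‖Proj q.1‖ * ‖V - W‖ := norm_mul_le _ _
      nlinarith [norm_nonneg (Proj q.1 * (V - W) * Proj q.2), norm_nonneg (Proj q.1 * (V - W)),
        norm_nonneg (Proj q.1), norm_nonneg (Proj q.2), norm_nonneg P, norm_nonneg (V - W),
        norm_nonneg (M q)]
    calc ‖(∫ τ in (0:ℝ)..t, Complex.exp (c q * τ)) • M q‖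
        = ‖(∫ τ in (0:ℝ)..t, Complex.exp (c q * τ))‖ * ‖M q‖ :=
          norm_smul (∫ τ in (0:ℝ)..t, Complex.exp (c q * τ)) (M q)
      _ ≤ (2 / (Ep * |lam q.1 - lam q.2|)) * ‖V - W‖ := by
          rw [hIq]
          exact mul_le_mul habs hMq (norm_nonneg _) (by positivity)
      _ = (2 / Ep) * (‖V - W‖ / |lam q.1 - lam q.2|) := by
          field_simp
  calc ‖∑ q ∈ Finset.univ.filter (fun q : ι × ι => q.1 ≠ q.2),
        (∫ τ in (0:ℝ)..t, Complex.exp (c q * τ)) • M q‖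
      ≤ ∑ q ∈ Finset.univ.filter (fun q : ι × ι => q.1 ≠ q.2),
        ‖(∫ τ in (0:ℝ)..t, Complex.exp (c q * τ)) • M q‖ := norm_sum_le _ _
    _ ≤ ∑ q ∈ Finset.univ.filter (fun q : ι × ι => q.1 ≠ q.2),
        (2 / Ep) * (‖V - W‖ / |lam q.1 - lam q.2|) := Finset.sum_le_sum hbound
    _ = (2 / Ep) * ∑ p ∈ Finset.univ.filter (fun p : ι × ι => p.1 ≠ p.2),
        ‖V - W‖ / |lam p.1 - lam p.2| := (Finset.mul_sum _ _ _).symm
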